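/- Let d ≥ 1, ε > 0, and let Z be a random vector in ℝ^d whose density (with respect to Lebesgue measure) is proportional to exp(−(ε/2)‖z‖). Then E[Z] = 0, and for every fixed vector g ∈ ℝ^d with ‖g‖ ≤ 2 one has E[‖g + Z‖²] ≤ 4 + 4(d² + d)/ε². (This gives the noise level Γ² = 4 + 4(d²+d)/ε² of the locally differentially private gradient oracle, since the noiseless gradient λw + ∇ℓ(w,x,y) has norm at most 2 when ‖λw‖ ≤ 1 and ‖∇ℓ(w,x,y)‖ ≤ 1.) -/

import Mathlib

open MeasureTheory

/-- `x ^ n * exp (-(2 a x)) ≤ (n! / a^n) * exp (-(a x))` for `a > 0`, `x ≥ 0`. -/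
lemma aux_pow_mul_exp_bound {a x : ℝ} (ha : 0 < a) (hx : 0 ≤ x) (n : ℕ) :
    x ^ n * Real.exp (-(2 * a * x)) ≤ (n.factorial / a ^ n) * Real.exp (-(a * x)) := by
  have h := Real.pow_div_factorial_le_exp (a * x) (mul_nonneg ha.le hx) n
  have hxn : x ^ n ≤ (n.factorial / a ^ n) * Real.exp (a * x) := by
    rw [mul_pow] at h
    rw [div_mul_eq_mul_div, le_div_iff₀ (by positivity)]
    rw [div_le_iff₀ (by positivity)] at h
    nlinarith [h]
  have hexp : Real.exp (a * x) * Real.exp (-(2 * a * x)) = Real.exp (-(a * x)) := by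
    rw [← Real.exp_add]; ring_nf
  calc x ^ n * Real.exp (-(2 * a * x))
      ≤ (n.factorial / a ^ n) * Real.exp (a * x) * Real.exp (-(2 * a * x)) := by
        have := Real.exp_pos (-(2 * a * x))
        nlinarith
    _ = (n.factorial / a ^ n) * Real.exp (-(a * x)) := by rw [mul_assoc, hexp]

/-- `exp (-(a ‖z‖))` is integrable on `ℝ^d`. -/
lemma aux_integrable_exp_norm (d : ℕ) {a : ℝ} (ha : 0 < a) :
    Integrable (fun z : EuclideanSpace ℝ (Fin d) => Real.exp (-(a * ‖z‖))) := by
  have hfin : (Module.finrank ℝ (EuclideanSpace ℝ (Fin d)) : ℝ) < ((d + 1 : ℕ) : ℝ) := by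
    simp [finrank_euclideanSpace_fin]
  set M : ℝ := ((d + 1).factorial / a ^ (d + 1)) * Real.exp a with hM
  refine ((integrable_one_add_norm (E := EuclideanSpace ℝ (Fin d))
      (μ := volume) hfin).const_mul M).mono' ?_ ?_
  · exact (Real.continuous_exp.comp
      ((continuous_const.mul continuous_norm).neg)).aestronglyMeasurable
  · refine Filter.Eventually.of_forall fun z => ?_
    have hr : (0 : ℝ) ≤ ‖z‖ := norm_nonneg z
    have h1r : (0 : ℝ) < 1 + ‖z‖ := by linarith
    rw [Real.norm_eq_abs, abs_of_pos (Real.exp_pos _)]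
    have hpow : (1 + ‖z‖) ^ (-((d + 1 : ℕ) : ℝ)) = ((1 + ‖z‖) ^ (d + 1))⁻¹ := by
      rw [Real.rpow_neg h1r.le, Real.rpow_natCast]
    rw [hpow]
    have hppos : (0 : ℝ) < (1 + ‖z‖) ^ (d + 1) := by positivity
    have key : (1 + ‖z‖) ^ (d + 1) ≤ ((d + 1).factorial / a ^ (d + 1)) *
        (Real.exp a * Real.exp (a * ‖z‖)) := by
      have h := Real.pow_div_factorial_le_exp (a * (1 + ‖z‖)) (by positivity) (d + 1)
      rw [div_le_iff₀ (by positivity)] at h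
      rw [mul_pow] at h
      have h2 : Real.exp (a * (1 + ‖z‖)) = Real.exp a * Real.exp (a * ‖z‖) := by
        rw [← Real.exp_add]; ring_nf
      rw [h2] at h
      have hap : (0 : ℝ) < a ^ (d + 1) := by positivity
      rw [div_mul_eq_mul_div, le_div_iff₀ hap]
      nlinarith [h]
    have hexp2 : Real.exp (-(a * ‖z‖)) * Real.exp (a * ‖z‖) = 1 := by
      rw [← Real.exp_add]; simp
    have key2 : Real.exp (-(a * ‖z‖)) * (1 + ‖z‖) ^ (d + 1) ≤ M := by
      calc Real.exp (-(a * ‖z‖)) * (1 + ‖z‖) ^ (d + 1)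
          ≤ Real.exp (-(a * ‖z‖)) * (((d + 1).factorial / a ^ (d + 1)) *
              (Real.exp a * Real.exp (a * ‖z‖))) :=
            mul_le_mul_of_nonneg_left key (Real.exp_pos _).le
        _ = M := by
            rw [hM]
            linear_combination
              (((d + 1).factorial : ℝ) / a ^ (d + 1) * Real.exp a) * hexp2
    rw [← div_eq_mul_inv, le_div_iff₀ hppos]
    exact key2

/-- `‖z‖^k * exp (-(a ‖z‖))` is integrable on `ℝ^d`. -/
lemma aux_integrable_pow_mul_exp (d k : ℕ) {a : ℝ} (ha : 0 < a) :
    Integrable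
      (fun z : EuclideanSpace ℝ (Fin d) => ‖z‖ ^ k * Real.exp (-(a * ‖z‖))) := by
  have hb : (0 : ℝ) < a / 2 := by linarith
  refine ((aux_integrable_exp_norm d hb).const_mul
      (k.factorial / (a / 2) ^ k)).mono' ?_ ?_
  · exact ((continuous_norm.pow k).mul (Real.continuous_exp.comp
      ((continuous_const.mul continuous_norm).neg))).aestronglyMeasurable
  · refine Filter.Eventually.of_forall fun z => ?_
    have := aux_pow_mul_exp_bound hb (norm_nonneg z) k
    rw [Real.norm_eq_abs, abs_of_nonneg (by positivity)]
    have h2 : 2 * (a / 2) * ‖z‖ = a * ‖z‖ := by ring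
    rw [h2] at this
    exact this

/-- Moments of the exponential density via polar coordinates. -/
lemma aux_moment_eq (d : ℕ) (hd : 1 ≤ d) (k : ℕ) {a : ℝ} (ha : 0 < a) :
    ∫ z : EuclideanSpace ℝ (Fin d), ‖z‖ ^ k * Real.exp (-(a * ‖z‖)) =
      ((d : ℝ) * (volume (Metric.ball (0 : EuclideanSpace ℝ (Fin d)) 1)).toReal) *
        ((1 / a) ^ (d + k) * Real.Gamma ((d + k : ℕ) : ℝ)) := by
  haveI : Nontrivial (EuclideanSpace ℝ (Fin d)) := by
    refine Module.nontrivial_of_finrank_pos (R := ℝ) ?_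
    simp only [finrank_euclideanSpace_fin]; omega
  have hdim : Module.finrank ℝ (EuclideanSpace ℝ (Fin d)) = d := finrank_euclideanSpace_fin
  have := integral_fun_norm_addHaar (volume : Measure (EuclideanSpace ℝ (Fin d)))
    (fun r : ℝ => r ^ k * Real.exp (-(a * r)))
  rw [hdim] at this
  rw [this, nsmul_eq_mul, smul_eq_mul]
  have hinner : (∫ y in Set.Ioi (0 : ℝ), y ^ (d - 1) • (y ^ k * Real.exp (-(a * y)))) =
      (1 / a) ^ (d + k) * Real.Gamma ((d + k : ℕ) : ℝ) := by
    have hcongr : (∫ y in Set.Ioi (0 : ℝ), y ^ (d - 1) • (y ^ k * Real.exp (-(a * y)))) =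
        ∫ t in Set.Ioi (0 : ℝ), t ^ (((d + k : ℕ) : ℝ) - 1) * Real.exp (-(a * t)) := by
      refine setIntegral_congr_fun measurableSet_Ioi fun t ht => ?_
      have ht0 : (0 : ℝ) < t := ht
      have hcast : ((d + k : ℕ) : ℝ) - 1 = ((d + k - 1 : ℕ) : ℝ) := by
        push_cast [Nat.cast_sub (by omega : 1 ≤ d + k)]; ring
      rw [hcast, Real.rpow_natCast, smul_eq_mul, ← mul_assoc, ← pow_add]
      congr 2
      omega
    rw [hcongr, Real.integral_rpow_mul_exp_neg_mul_Ioi (by positivity) ha,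
      Real.rpow_natCast]
  rw [hinner, measureReal_def]; ring

theorem statement_2 (d : ℕ) (hd : 1 ≤ d) (ε : ℝ) (hε : 0 < ε)
    (g : EuclideanSpace ℝ (Fin d)) (hg : ‖g‖ ≤ 2) :
    (∫ z : EuclideanSpace ℝ (Fin d), Real.exp (-(ε / 2) * ‖z‖) • z) = 0 ∧
    ∫ z : EuclideanSpace ℝ (Fin d), ‖g + z‖ ^ 2 * Real.exp (-(ε / 2) * ‖z‖) ≤
      (4 + 4 * ((d : ℝ) ^ 2 + (d : ℝ)) / ε ^ 2) *
        ∫ z : EuclideanSpace ℝ (Fin d), Real.exp (-(ε / 2) * ‖z‖) := by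
  have ha : (0 : ℝ) < ε / 2 := by linarith
  set a : ℝ := ε / 2 with ha_def
  have hform : ∀ z : EuclideanSpace ℝ (Fin d),
      Real.exp (-(ε / 2) * ‖z‖) = Real.exp (-(a * ‖z‖)) := by
    intro z; rw [ha_def]; ring_nf
  -- part 1 : mean zero by symmetry
  have hmean : (∫ z : EuclideanSpace ℝ (Fin d), Real.exp (-(ε / 2) * ‖z‖) • z) = 0 := by
    set I := ∫ z : EuclideanSpace ℝ (Fin d), Real.exp (-(ε / 2) * ‖z‖) • z with hI
    have hneg : I = -I := by
      conv_lhs => rw [hI, ← integral_neg_eq_self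
        (fun z : EuclideanSpace ℝ (Fin d) => Real.exp (-(ε / 2) * ‖z‖) • z) volume]
      have : ∀ z : EuclideanSpace ℝ (Fin d),
          Real.exp (-(ε / 2) * ‖(-z)‖) • (-z) =
            -(Real.exp (-(ε / 2) * ‖z‖) • z) := by
        intro z; rw [norm_neg, smul_neg]
      simp_rw [this]
      rw [integral_neg]
    have h2 : (2 : ℝ) • I = 0 := by
      rw [two_smul]; nth_rewrite 2 [hneg]; simp
    rcases smul_eq_zero.mp h2 with h | h
    · norm_num at h
    · exact h
  refine ⟨hmean, ?_⟩
  -- integrabilities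
  have h0 : Integrable (fun z : EuclideanSpace ℝ (Fin d) => Real.exp (-(ε / 2) * ‖z‖)) := by
    simp_rw [hform]; exact aux_integrable_exp_norm d ha
  have h2' : Integrable
      (fun z : EuclideanSpace ℝ (Fin d) => ‖z‖ ^ 2 * Real.exp (-(ε / 2) * ‖z‖)) := by
    simp_rw [hform]; exact aux_integrable_pow_mul_exp d 2 ha
  have hsmul : Integrable
      (fun z : EuclideanSpace ℝ (Fin d) => Real.exp (-(ε / 2) * ‖z‖) • z) := by
    have h1 : Integrable
        (fun z : EuclideanSpace ℝ (Fin d) => ‖z‖ ^ 1 * Real.exp (-(ε / 2) * ‖z‖)) := by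
      simp_rw [hform]; exact aux_integrable_pow_mul_exp d 1 ha
    refine h1.mono' ?_ ?_
    · apply Continuous.aestronglyMeasurable
      exact (Real.continuous_exp.comp
        ((continuous_const.mul continuous_norm))).smul continuous_id
    · refine Filter.Eventually.of_forall fun z => ?_
      rw [norm_smul, Real.norm_eq_abs, abs_of_pos (Real.exp_pos _), pow_one]
      exact le_of_eq (mul_comm _ _)
  have hinner : Integrable
      (fun z : EuclideanSpace ℝ (Fin d) =>
        (2 * (inner ℝ g z : ℝ)) * Real.exp (-(ε / 2) * ‖z‖)) := by
    have := (hsmul.const_inner (𝕜 := ℝ) g).const_mul (2 : ℝ)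
    refine this.congr (Filter.Eventually.of_forall fun z => ?_)
    simp only [real_inner_smul_right]
    ring
  -- expand the square
  have hexpand : (∫ z : EuclideanSpace ℝ (Fin d), ‖g + z‖ ^ 2 * Real.exp (-(ε / 2) * ‖z‖)) =
      (∫ z : EuclideanSpace ℝ (Fin d), ‖g‖ ^ 2 * Real.exp (-(ε / 2) * ‖z‖)) +
      (∫ z : EuclideanSpace ℝ (Fin d), (2 * (inner ℝ g z : ℝ)) * Real.exp (-(ε / 2) * ‖z‖)) +
      (∫ z : EuclideanSpace ℝ (Fin d), ‖z‖ ^ 2 * Real.exp (-(ε / 2) * ‖z‖)) := by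
    have hfe : (fun z : EuclideanSpace ℝ (Fin d) => ‖g + z‖ ^ 2 * Real.exp (-(ε / 2) * ‖z‖)) =
        fun z => (‖g‖ ^ 2 * Real.exp (-(ε / 2) * ‖z‖) +
          (2 * (inner ℝ g z : ℝ)) * Real.exp (-(ε / 2) * ‖z‖)) +
          ‖z‖ ^ 2 * Real.exp (-(ε / 2) * ‖z‖) := by
      funext z; rw [norm_add_sq_real]; ring
    have hAB : Integrable (fun z : EuclideanSpace ℝ (Fin d) =>
        ‖g‖ ^ 2 * Real.exp (-(ε / 2) * ‖z‖) +
          (2 * (inner ℝ g z : ℝ)) * Real.exp (-(ε / 2) * ‖z‖)) volume :=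
      (h0.const_mul (‖g‖ ^ 2)).add hinner
    rw [hfe, integral_add hAB h2', integral_add (h0.const_mul (‖g‖ ^ 2)) hinner]
  -- the cross term vanishes
  have hcross : (∫ z : EuclideanSpace ℝ (Fin d),
      (2 * (inner ℝ g z : ℝ)) * Real.exp (-(ε / 2) * ‖z‖)) = 0 := by
    have heq : ∀ z : EuclideanSpace ℝ (Fin d),
        (2 * (inner ℝ g z : ℝ)) * Real.exp (-(ε / 2) * ‖z‖) =
          2 * (inner ℝ g (Real.exp (-(ε / 2) * ‖z‖) • z) : ℝ) := by
      intro z; simp only [real_inner_smul_right]; ring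
    simp_rw [heq]
    rw [integral_const_mul, integral_inner (𝕜 := ℝ) hsmul, hmean, inner_zero_right, mul_zero]
  -- moment identities
  have hI0 : (∫ z : EuclideanSpace ℝ (Fin d), Real.exp (-(ε / 2) * ‖z‖)) =
      ((d : ℝ) * (volume (Metric.ball (0 : EuclideanSpace ℝ (Fin d)) 1)).toReal) *
        ((1 / a) ^ (d + 0) * Real.Gamma ((d + 0 : ℕ) : ℝ)) := by
    have := aux_moment_eq d hd 0 ha
    simp_rw [hform]
    simpa using this
  have hI2 : (∫ z : EuclideanSpace ℝ (Fin d), ‖z‖ ^ 2 * Real.exp (-(ε / 2) * ‖z‖)) =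
      ((d : ℝ) * (volume (Metric.ball (0 : EuclideanSpace ℝ (Fin d)) 1)).toReal) *
        ((1 / a) ^ (d + 2) * Real.Gamma ((d + 2 : ℕ) : ℝ)) := by
    simp_rw [hform]; exact aux_moment_eq d hd 2 ha
  set B : ℝ := (d : ℝ) * (volume (Metric.ball (0 : EuclideanSpace ℝ (Fin d)) 1)).toReal with hB
  have hBnn : 0 ≤ B := by
    rw [hB]; positivity
  -- Gamma recurrence
  have hdpos : (0 : ℝ) < (d : ℝ) := by exact_mod_cast hd
  have hGamma : Real.Gamma ((d + 2 : ℕ) : ℝ) =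
      ((d : ℝ) + 1) * (d : ℝ) * Real.Gamma ((d + 0 : ℕ) : ℝ) := by
    have h1 : ((d + 2 : ℕ) : ℝ) = ((d : ℝ) + 1) + 1 := by push_cast; ring
    have h2 : ((d + 0 : ℕ) : ℝ) = (d : ℝ) := by push_cast; ring
    rw [h1, h2, Real.Gamma_add_one (by positivity), Real.Gamma_add_one (by positivity)]
    ring
  -- ratio identity
  have hratio : (1 / a) ^ (d + 2) * Real.Gamma ((d + 2 : ℕ) : ℝ) =
      (4 * ((d : ℝ) ^ 2 + (d : ℝ)) / ε ^ 2) *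
        ((1 / a) ^ (d + 0) * Real.Gamma ((d + 0 : ℕ) : ℝ)) := by
    rw [hGamma, pow_add, pow_add]
    have hε' : ε ≠ 0 := ne_of_gt hε
    rw [ha_def]
    field_simp
    ring
  -- nonnegativity of the zeroth moment
  have hI0nn : 0 ≤ (∫ z : EuclideanSpace ℝ (Fin d), Real.exp (-(ε / 2) * ‖z‖)) :=
    integral_nonneg fun z => (Real.exp_pos _).le
  -- combine
  rw [hexpand, hcross, add_zero, integral_const_mul, hI2, hI0, hratio]
  have hg2 : ‖g‖ ^ 2 ≤ 4 := by nlinarith [norm_nonneg g]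
  have hJnn : 0 ≤ (1 / a) ^ (d + 0) * Real.Gamma ((d + 0 : ℕ) : ℝ) := by
    have : (0 : ℝ) ≤ Real.Gamma ((d + 0 : ℕ) : ℝ) :=
      Real.Gamma_nonneg_of_nonneg (by positivity)
    positivity
  nlinarith [mul_nonneg hBnn hJnn]
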